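/- For every n ≥ 1, the class of languages accepted by stateless deterministic pushdown automata with at most n pushdown symbols is strictly contained in the class for n+1 pushdown symbols, witnessed by a language over a binary alphabet. -/

import Mathlib

/-- The binary input alphabet `{a, b}`. -/
inductive Bin : Type
  | a : Bin
  | b : Bin
deriving DecidableEq

/-- The language `L_n = { b^k a | 1 ≤ k ≤ n-1 }` over `{a, b}`. -/
def Ln (n : ℕ) : Set (List Bin) :=
  {w | ∃ k, 1 ≤ k ∧ k ≤ n - 1 ∧ w = List.replicate k Bin.b ++ [Bin.a]}

/-- A stateless deterministic pushdown automaton over input alphabet `A`: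
one (implicit) state, pushdown alphabet `Γ`, transition function `δ`
(where `δ X none` is an ε-move on top symbol `X`, and `δ X (some a)` is an
input move), an initial pushdown string `α ≠ []`.  Determinism: if an ε-move
is defined on `X`, then no input move is defined on `X`. -/
structure SDPDA (A : Type) where
  Γ : Type
  [instΓ : Fintype Γ]
  δ : Γ → Option A → Option (List Γ)
  det : ∀ X : Γ, δ X none ≠ none → ∀ a : A, δ X (some a) = none
  α : List Γ
  α_ne : α ≠ []

attribute [instance] SDPDA.instΓ

/-- `M.Steps γ w γ'` : starting with pushdown content `γ` (top of the pushdown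
is the head of the list), the automaton can read the input string `w` and end
with pushdown content `γ'`. -/
inductive SDPDA.Steps {A : Type} (M : SDPDA A) : List M.Γ → List A → List M.Γ → Prop
  | refl (γ : List M.Γ) : SDPDA.Steps M γ [] γ
  | input {X : M.Γ} {γ w : List M.Γ} {a : A} {ws : List A} {γ' : List M.Γ} :
      M.δ X (some a) = some w → SDPDA.Steps M (w ++ γ) ws γ' →
      SDPDA.Steps M (X :: γ) (a :: ws) γ'
  | eps {X : M.Γ} {γ w : List M.Γ} {ws : List A} {γ' : List M.Γ} :
      M.δ X none = some w → SDPDA.Steps M (w ++ γ) ws γ' →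
      SDPDA.Steps M (X :: γ) ws γ'

/-- Acceptance by empty pushdown. -/
def SDPDA.Accepts {A : Type} (M : SDPDA A) (w : List A) : Prop :=
  M.Steps M.α w []

/-- The family `n`-SDPDA of languages over the binary alphabet `{a, b}`
accepted by stateless deterministic pushdown automata with at most `n`
pushdown symbols. -/
def nSDPDA (n : ℕ) : Set (Set (List Bin)) :=
  {L | ∃ M : SDPDA Bin, Fintype.card M.Γ ≤ n ∧
        ∀ w : List Bin, M.Accepts w ↔ w ∈ L}

namespace SDPDA

variable {A : Type} {M : SDPDA A}

theorem steps_trans {γ γ' γ'' : List M.Γ} {u v : List A}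
    (h1 : M.Steps γ u γ') (h2 : M.Steps γ' v γ'') : M.Steps γ (u ++ v) γ'' := by
  induction h1 with
  | refl _ => exact h2
  | input hδ _ ih => exact Steps.input hδ (ih h2)
  | eps hδ _ ih => exact Steps.eps hδ (ih h2)

theorem steps_append {γ1 γ2 : List M.Γ} {u : List A} (δl : List M.Γ)
    (h : M.Steps γ1 u γ2) : M.Steps (γ1 ++ δl) u (γ2 ++ δl) := by
  induction h with
  | refl _ => exact Steps.refl _
  | input hδ _ ih => exact Steps.input hδ (by rwa [List.append_assoc] at ih)
  | eps hδ _ ih => exact Steps.eps hδ (by rwa [List.append_assoc] at ih)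

theorem steps_nil {w : List A} {γ' : List M.Γ} (h : M.Steps [] w γ') :
    w = [] ∧ γ' = [] := by
  cases h with
  | refl => exact ⟨rfl, rfl⟩

theorem steps_det {γ γ' : List M.Γ} {u : List A} (h1 : M.Steps γ u γ') :
    ∀ v : List A, M.Steps γ (u ++ v) [] → M.Steps γ' v [] := by
  induction h1 with
  | refl _ => exact fun v h2 => h2
  | @input X γ w a ws γ' hδ _ ih =>
    intro v h2
    rw [List.cons_append] at h2
    cases h2 with
    | input hδ2 h2' =>
      rw [hδ] at hδ2
      injection hδ2 with e
      exact ih v (by rwa [e])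
    | eps hδ2 _ =>
      have := M.det X (by rw [hδ2]; simp) a
      rw [this] at hδ
      exact absurd hδ (by simp)
  | @eps X γ w ws γ' hδ _ ih =>
    intro v h2
    generalize hm : ws ++ v = m at h2
    cases h2 with
    | @input _ _ _ a2 _ _ hδ2 _ =>
      have := M.det X (by rw [hδ]; simp) a2
      rw [this] at hδ2
      exact absurd hδ2 (by simp)
    | eps hδ2 h2' =>
      rw [hδ] at hδ2
      injection hδ2 with e
      refine ih v ?_
      rw [hm, e]
      exact h2'

theorem steps_cons {γ γf : List M.Γ} {w0 : List A} (h : M.Steps γ w0 γf) :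
    ∀ (x : A) (w : List A), w0 = x :: w →
      ∃ γ', M.Steps γ [x] γ' ∧ M.Steps γ' w γf := by
  induction h with
  | refl _ => intro x w hw; exact absurd hw (by simp)
  | @input X γ wp a ws γf hδ hst _ =>
    intro x w hw
    injection hw with e1 e2
    subst e1; subst e2
    exact ⟨wp ++ γ, Steps.input hδ (Steps.refl _), hst⟩
  | @eps X γ wp ws γf hδ _ ih =>
    intro x w hw
    obtain ⟨γ', h1, h2⟩ := ih x w hw
    exact ⟨γ', Steps.eps hδ h1, h2⟩

theorem steps_split_word (u : List A) {v : List A} {γ γf : List M.Γ}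
    (h : M.Steps γ (u ++ v) γf) : ∃ γ', M.Steps γ u γ' ∧ M.Steps γ' v γf := by
  induction u generalizing γ with
  | nil => exact ⟨γ, Steps.refl _, h⟩
  | cons x u' ih =>
    obtain ⟨γ1, h1, h2⟩ := steps_cons h x (u' ++ v) rfl
    obtain ⟨γ', h3, h4⟩ := ih h2
    exact ⟨γ', by simpa using steps_trans h1 h3, h4⟩

theorem steps_stack_split {γ0 : List M.Γ} {w : List A} {γf : List M.Γ}
    (h : M.Steps γ0 w γf) : γf = [] → ∀ γ1 γ2 : List M.Γ, γ0 = γ1 ++ γ2 →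
      ∃ u v, w = u ++ v ∧ M.Steps γ1 u [] ∧ M.Steps γ2 v [] := by
  induction h with
  | refl γ =>
    intro hf γ1 γ2 he
    subst hf
    obtain ⟨h1, h2⟩ := List.append_eq_nil_iff.mp he.symm
    subst h1; subst h2
    exact ⟨[], [], rfl, Steps.refl _, Steps.refl _⟩
  | @input X γ wp a ws γf hδ hst ih =>
    intro hf γ1 γ2 he
    cases γ1 with
    | nil =>
      simp at he
      subst he; subst hf
      exact ⟨[], a :: ws, rfl, Steps.refl _, Steps.input hδ hst⟩
    | cons Y γ1' =>
      injection he with e1 e2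
      subst e1
      obtain ⟨u', v, hw, h1, h2⟩ := ih hf (wp ++ γ1') γ2 (by simp [e2])
      exact ⟨a :: u', v, by simp [hw], Steps.input hδ h1, h2⟩
  | @eps X γ wp ws γf hδ hst ih =>
    intro hf γ1 γ2 he
    cases γ1 with
    | nil =>
      simp at he
      subst he; subst hf
      exact ⟨[], ws, rfl, Steps.refl _, Steps.eps hδ hst⟩
    | cons Y γ1' =>
      injection he with e1 e2
      subst e1
      obtain ⟨u', v, hw, h1, h2⟩ := ih hf (wp ++ γ1') γ2 (by simp [e2])
      exact ⟨u', v, hw, Steps.eps hδ h1, h2⟩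

theorem exists_good (M : SDPDA Bin) : ∀ τ : List M.Γ, M.Steps τ [Bin.a] [] →
    ∃ Z ∈ τ, ∀ w, M.Steps [Z] w [] ↔ M.Steps τ w [] := by
  intro τ
  induction τ with
  | nil => intro h; have := steps_nil h; simp at this
  | cons X β ih =>
    intro h
    obtain ⟨u, v, huv, h1, h2⟩ := steps_stack_split h rfl [X] β rfl
    cases u with
    | nil =>
      have hv : v = [Bin.a] := by simpa using huv.symm
      rw [hv] at h2
      have hequiv : ∀ w, M.Steps β w [] ↔ M.Steps (X :: β) w [] := by
        intro w
        constructor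
        · intro hw
          have h3 : M.Steps (X :: β) [] β := by
            have := steps_append β h1
            simpa using this
          simpa using steps_trans h3 hw
        · intro hw
          obtain ⟨u', v', huv', hu', hv'⟩ := steps_stack_split hw rfl [X] β rfl
          have hnil : u' = [] := (steps_nil (steps_det h1 u' hu')).1
          rw [huv', hnil]
          simpa using hv'
      obtain ⟨Z, hZmem, hZ⟩ := ih h2
      exact ⟨Z, List.mem_cons_of_mem _ hZmem, fun w => (hZ w).trans (hequiv w)⟩
    | cons x u' =>
      have hx : x = Bin.a ∧ u' = [] ∧ v = [] := by
        rw [List.cons_append] at huv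
        injection huv with e1 e2
        obtain ⟨e3, e4⟩ := List.append_eq_nil_iff.mp e2.symm
        exact ⟨e1.symm, e3, e4⟩
      obtain ⟨ex, eu, ev⟩ := hx
      subst ex; subst eu; subst ev
      refine ⟨X, List.mem_cons_self, fun w => ⟨?_, ?_⟩⟩
      · intro hw
        have h3 : M.Steps (X :: β) w β := by
          have := steps_append β hw
          simpa using this
        simpa using steps_trans h3 h2
      · intro hw
        obtain ⟨u', v', huv', hu', hv'⟩ := steps_stack_split hw rfl [X] β rfl
        have hnil : v' = [] := (steps_nil (steps_det h2 v' hv')).1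
        rw [huv', hnil]
        simpa using hu'

end SDPDA

/-- `b^t a` -/
def wka (t : ℕ) : List Bin := List.replicate t Bin.b ++ [Bin.a]

theorem wka_length (t : ℕ) : (wka t).length = t + 1 := by simp [wka]

theorem wka_inj {s t : ℕ} (h : wka s = wka t) : s = t := by
  have := congrArg List.length h
  simpa [wka] using this

theorem repl_prefix : ∀ (k j : ℕ) (w : List Bin),
    List.replicate k Bin.b ++ w = wka j → k ≤ j ∧ w = wka (j - k) := by
  intro k
  induction k with
  | zero => intro j w h; simpa [wka] using h
  | succ k ih =>
    intro j w h
    cases j with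
    | zero =>
      rw [List.replicate_succ] at h
      simp [wka] at h
    | succ j =>
      rw [List.replicate_succ] at h
      rw [show wka (j+1) = Bin.b :: wka j by simp [wka, List.replicate_succ]] at h
      rw [List.cons_append] at h
      injection h with _ e
      obtain ⟨h1, h2⟩ := ih j w e
      exact ⟨by omega, by simpa [Nat.succ_sub_succ] using h2⟩
open SDPDA in
theorem Ln_not_in (n : ℕ) (hn : 1 ≤ n) (M : SDPDA Bin)
    (hcard : Fintype.card M.Γ ≤ n)
    (hacc : ∀ w, M.Accepts w ↔ w ∈ Ln (n + 1)) : False := by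
  classical
  have hL : ∀ w, M.Steps M.α w [] ↔ ∃ k, 1 ≤ k ∧ k ≤ n ∧ w = wka k := by
    intro w
    have := hacc w
    rw [SDPDA.Accepts] at this
    rw [this]
    simp [Ln, wka]
  -- for each 1 ≤ k ≤ n there is a symbol whose language is {b^t a | t ≤ n - k}
  have hsym : ∀ k, 1 ≤ k → k ≤ n →
      ∃ Z : M.Γ, ∀ w, M.Steps [Z] w [] ↔ ∃ t, t ≤ n - k ∧ w = wka t := by
    intro k h1k hkn
    have hacck : M.Steps M.α (wka k) [] := (hL _).2 ⟨k, h1k, hkn, rfl⟩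
    obtain ⟨σ, hσ1, hσ2⟩ := steps_split_word (List.replicate k Bin.b) hacck
    have hAcc : ∀ w, M.Steps σ w [] ↔ ∃ t, t ≤ n - k ∧ w = wka t := by
      intro w
      constructor
      · intro hw
        have h3 : M.Steps M.α (List.replicate k Bin.b ++ w) [] := steps_trans hσ1 hw
        obtain ⟨j, h1j, hjn, hj⟩ := (hL _).1 h3
        obtain ⟨hkj, hw'⟩ := repl_prefix k j w (by rw [← hj])
        exact ⟨j - k, by omega, hw'⟩
      · rintro ⟨t, htk, rfl⟩
        have hkt : k + t ≤ n := by omega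
        have h1 : M.Steps M.α (wka (k + t)) [] := (hL _).2 ⟨k + t, by omega, hkt, rfl⟩
        have he : wka (k + t) = List.replicate k Bin.b ++ wka t := by
          rw [wka, wka, List.replicate_add, List.append_assoc]
        exact steps_det hσ1 (wka t) (by rw [← he]; exact h1)
    obtain ⟨Z, _, hZ⟩ := exists_good M σ ((hAcc [Bin.a]).2 ⟨0, Nat.zero_le _, rfl⟩)
    exact ⟨Z, fun w => (hZ w).trans (hAcc w)⟩
  have hne : Nonempty M.Γ := by
    cases hα : M.α with
    | nil => exact absurd hα M.α_ne
    | cons X _ => exact ⟨X⟩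
  have hsym' : ∀ k : ℕ, ∃ Z : M.Γ, 1 ≤ k → k ≤ n →
      ∀ w, M.Steps [Z] w [] ↔ ∃ t, t ≤ n - k ∧ w = wka t := by
    intro k
    by_cases h : 1 ≤ k ∧ k ≤ n
    · obtain ⟨Z, hZ⟩ := hsym k h.1 h.2
      exact ⟨Z, fun _ _ => hZ⟩
    · exact ⟨Classical.choice hne, fun h1 h2 => absurd ⟨h1, h2⟩ h⟩
  choose T hT using hsym'
  have hinj : Set.InjOn T (Finset.Icc 1 n) := by
    intro k hk l hl hkl
    have hk' := Finset.mem_Icc.1 (Finset.mem_coe.1 hk)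
    have hl' := Finset.mem_Icc.1 (Finset.mem_coe.1 hl)
    have h1 : M.Steps [T k] (wka (n - k)) [] :=
      (hT k hk'.1 hk'.2 (wka (n - k))).2 ⟨n - k, le_refl _, rfl⟩
    obtain ⟨t, htl, ht⟩ := (hT l hl'.1 hl'.2 (wka (n - k))).1 (hkl ▸ h1)
    have e1 : n - k = t := wka_inj ht
    have h2 : M.Steps [T l] (wka (n - l)) [] :=
      (hT l hl'.1 hl'.2 (wka (n - l))).2 ⟨n - l, le_refl _, rfl⟩
    obtain ⟨s, hsk, hs⟩ := (hT k hk'.1 hk'.2 (wka (n - l))).1 (hkl ▸ h2)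
    have e2 : n - l = s := wka_inj hs
    omega
  have himg : ((Finset.Icc 1 n).image T).card = n := by
    rw [Finset.card_image_of_injOn hinj, Nat.card_Icc]
    omega
  have huniv : (Finset.Icc 1 n).image T = Finset.univ :=
    Finset.eq_univ_of_card _ (le_antisymm (Finset.card_le_univ _) (by rw [himg]; exact hcard))
  have hall : ∀ X : M.Γ, ∃ m, ∀ w, M.Steps [X] w [] ↔ ∃ t, t ≤ m ∧ w = wka t := by
    intro X
    have hX : X ∈ (Finset.Icc 1 n).image T := huniv ▸ Finset.mem_univ X
    obtain ⟨k, hk, hkX⟩ := Finset.mem_image.1 hX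
    have hk' := Finset.mem_Icc.1 hk
    exact ⟨n - k, fun w => hkX ▸ hT k hk'.1 hk'.2 w⟩
  -- final contradiction
  have hba : M.Steps M.α (wka 1) [] := (hL _).2 ⟨1, le_refl _, hn, rfl⟩
  obtain ⟨X, β, hα⟩ : ∃ X β, M.α = X :: β := by
    cases h : M.α with
    | nil => exact absurd h M.α_ne
    | cons X β => exact ⟨X, β, rfl⟩
  obtain ⟨u, v, huv, hu, hv2⟩ := steps_stack_split hba rfl [X] β (by rw [hα]; rfl)
  obtain ⟨m, hm⟩ := hall X
  obtain ⟨t, htm, hut⟩ := (hm u).1 hu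
  subst hut
  -- wka 1 = wka t ++ v  forces t = 1 and v = []
  have hv : v = [] := by
    have h5 : List.replicate t Bin.b ++ ([Bin.a] ++ v) = wka 1 := by
      rw [← List.append_assoc, ← wka, ← huv]
    obtain ⟨ht1, hrest⟩ := repl_prefix t 1 ([Bin.a] ++ v) h5
    interval_cases t
    · simp [wka] at hrest
    · simpa [wka] using hrest
  rw [hv] at hv2
  cases hβ : β with
  | nil =>
    rw [hβ] at hα
    have ha : M.Steps M.α [Bin.a] [] := by
      rw [hα]
      exact (hm [Bin.a]).2 ⟨0, Nat.zero_le _, rfl⟩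
    obtain ⟨k, h1k, _, hk⟩ := (hL _).1 ha
    have := congrArg List.length hk
    simp [wka] at this
    omega
  | cons Y rest =>
    rw [hβ] at hv2
    obtain ⟨u', v', huv', hu', _⟩ := steps_stack_split hv2 rfl [Y] rest rfl
    have hu'nil : u' = [] := (List.append_eq_nil_iff.mp huv'.symm).1
    obtain ⟨m', hm'⟩ := hall Y
    obtain ⟨t', _, ht'⟩ := (hm' u').1 hu'
    rw [hu'nil] at ht'
    have := congrArg List.length ht'
    simp [wka] at this
/-- The witness machine with `n+1` pushdown symbols: symbol `i` means
"`i` letters `b` read so far". -/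
def posM (n : ℕ) : SDPDA Bin where
  Γ := Fin (n + 1)
  δ := fun i o =>
    match o with
    | none => none
    | some Bin.b => if h : (i : ℕ) < n then some [⟨(i : ℕ) + 1, by omega⟩] else none
    | some Bin.a => if 1 ≤ (i : ℕ) then some [] else none
  det := fun _ h _ => absurd rfl h
  α := [⟨0, Nat.succ_pos n⟩]
  α_ne := by simp

theorem posM_steps (n : ℕ) : ∀ (w : List Bin) (i : Fin (n + 1)),
    (posM n).Steps [i] w [] ↔
      ∃ k, 1 ≤ (i : ℕ) + k ∧ (i : ℕ) + k ≤ n ∧ w = List.replicate k Bin.b ++ [Bin.a] := by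
  intro w
  induction w with
  | nil =>
    intro i
    constructor
    · intro h
      cases h with
      | eps hδ _ => exact absurd hδ (by simp [posM])
    · rintro ⟨k, _, _, hk⟩
      simp at hk
  | cons x w' ih =>
    intro i
    constructor
    · intro h
      cases h with
      | @input _ _ wp _ _ _ hδ hst =>
        cases x with
        | a =>
          have hi : 1 ≤ (i : ℕ) := by
            by_contra hi
            simp [posM, hi] at hδ
          simp [posM, hi] at hδ
          cases hδ
          have hw' : w' = [] := (SDPDA.steps_nil (by exact hst)).1
          exact ⟨0, by omega, by omega, by simp [hw']⟩
        | b =>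
          have hi : (i : ℕ) < n := by
            by_contra hi
            simp [posM, hi] at hδ
          simp [posM, hi] at hδ
          cases hδ
          obtain ⟨k', h1k, hkn, hw'⟩ := (ih ⟨(i : ℕ) + 1, by omega⟩).1 (by exact hst)
          simp only [Fin.val_mk] at h1k hkn
          refine ⟨k' + 1, by omega, by omega, ?_⟩
          rw [List.replicate_succ, hw']
          simp
      | eps hδ _ => exact absurd hδ (by simp [posM])
    · rintro ⟨k, h1k, hkn, hk⟩
      cases x with
      | a =>
        have hk0 : k = 0 := by
          cases k with
          | zero => rfl
          | succ k =>
            rw [List.replicate_succ] at hk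
            simp at hk
        subst hk0
        have hw' : w' = [] := by simpa using hk
        subst hw'
        have hi : 1 ≤ (i : ℕ) := by omega
        refine SDPDA.Steps.input (w := ([] : List (Fin (n + 1)))) (by simp [posM, hi]) ?_
        exact SDPDA.Steps.refl []
      | b =>
        have hk1 : ∃ k', k = k' + 1 := by
          cases k with
          | zero => simp at hk
          | succ k => exact ⟨k, rfl⟩
        obtain ⟨k', rfl⟩ := hk1
        rw [List.replicate_succ] at hk
        have hw' : w' = List.replicate k' Bin.b ++ [Bin.a] := by
          injection hk with _ e
        have hi : (i : ℕ) < n := by omega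
        refine SDPDA.Steps.input
          (w := ([⟨(i : ℕ) + 1, by omega⟩] : List (Fin (n + 1)))) (by simp [posM, hi]) ?_
        have h2 := (ih ⟨(i : ℕ) + 1, by omega⟩).2
          ⟨k', by simp only [Fin.val_mk]; omega, by simp only [Fin.val_mk]; omega, hw'⟩
        exact h2

theorem Ln_in (n : ℕ) : Ln (n + 1) ∈ nSDPDA (n + 1) := by
  refine ⟨posM n, le_of_eq (Fintype.card_fin (n + 1)), fun w => ?_⟩
  rw [SDPDA.Accepts, show (posM n).α = [(⟨0, Nat.succ_pos n⟩ : Fin (n + 1))] from rfl]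
  refine (posM_steps n w ⟨0, Nat.succ_pos n⟩).trans ?_
  simp only [Ln, Set.mem_setOf_eq, Nat.add_sub_cancel, Fin.val_mk, Nat.zero_add]

/-- For every `n ≥ 1`, `n`-SDPDA is strictly contained in
`(n+1)`-SDPDA, already for languages over a binary alphabet. -/
theorem nSDPDA_ssubset (n : ℕ) (hn : 1 ≤ n) : nSDPDA n ⊂ nSDPDA (n + 1) := by
  rw [Set.ssubset_def]
  constructor
  · rintro L ⟨M, hc, hi⟩
    exact ⟨M, hc.trans (Nat.le_succ n), hi⟩
  · intro hsub
    obtain ⟨M, hc, hi⟩ := hsub (Ln_in n)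
    exact Ln_not_in n hn M hc hi
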